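/- Let L : ℝ × ℝ → ℝ be a C² function of variables (S,P), defined on an open set where P ≠ 0, satisfying the self-duality equation L_S² − (2S/P)·L_S·L_P − L_P² = 1 identically. Define Θ(S,P) = 4(L − P·L_P − S·L_S) and T²(S,P) = 4(S²+P²)·L_S² + 4(L − P·L_P − S·L_S)². Then the Jacobian determinant ∂(Θ,T²)/∂(S,P) = Θ_S·(T²)_P − Θ_P·(T²)_S vanishes identically on this set. -/

import Mathlib

set_option linter.unreachableTactic false
set_option linter.unusedTactic false

open Filter Topology

private lemma jac_alg (a b c d e S P X : ℝ) (hPne : P ≠ 0)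
    (hsd : a ^ 2 - 2 * S / P * a * b - b ^ 2 = 1)
    (hIr : 2*a*c - (2*S/P)*(c*b + a*d) - (2/P)*a*b - 2*b*d = 0)
    (hIIr : 2*a*d + (2*S/P^2)*a*b - (2*S/P)*(d*b + a*e) - 2*b*e = 0) :
    (-4*(P*d + S*c)) * (8*P*a^2 + 8*(S^2 + P^2)*a*d - 8*X*(P*e + S*d))
      - (-4*(P*e + S*d)) * (8*S*a^2 + 8*(S^2 + P^2)*a*c - 8*X*(P*d + S*c)) = 0 := by
  have hsd' : P * a ^ 2 - 2 * S * a * b - P * b ^ 2 = P := by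
    field_simp at hsd; linear_combination hsd
  have hI : P*a*c - a*b - S*c*b - S*a*d - P*b*d = 0 := by
    field_simp at hIr; linear_combination hIr / 2
  have hII : P^2*a*d + S*a*b - S*P*b*d - S*P*a*e - P^2*b*e = 0 := by
    field_simp at hIIr
    have h2 : (2*P) * (P^2*a*d + S*a*b - S*P*b*d - S*P*a*e - P^2*b*e) = (2*P) * 0 := by
      rw [mul_zero]; linear_combination P * hIIr
    exact mul_left_cancel₀ (mul_ne_zero two_ne_zero hPne) h2
  by_cases hu : P*a - S*b = 0
  · by_cases hv : S*a + P*b = 0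
    · -- degenerate: a = b = 0, contradiction with hsd'
      exfalso
      have hSP : S^2 + P^2 ≠ 0 := by positivity
      have ha : a = 0 := by
        have h : (S^2 + P^2) * a = 0 := by linear_combination S*hv + P*hu
        exact (mul_eq_zero.mp h).resolve_left hSP
      have hb : b = 0 := by
        have h : (S^2 + P^2) * b = 0 := by linear_combination P*hv - S*hu
        exact (mul_eq_zero.mp h).resolve_left hSP
      rw [ha, hb] at hsd'
      apply hPne; linarith [hsd']
    · -- u = 0, v ≠ 0
      have key : (P * (S*a + P*b)^2) *
          ((-4*(P*d + S*c)) * (8*P*a^2 + 8*(S^2 + P^2)*a*d - 8*X*(P*e + S*d))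
            - (-4*(P*e + S*d)) * (8*S*a^2 + 8*(S^2 + P^2)*a*c - 8*X*(P*d + S*c))) = 0 := by
        linear_combination
          (32*b^2*d*S*P^4 + 64*b^2*d*S^3*P^2 + 32*b^2*d*S^5 + (-32)*b^3*S^4 + (-32)*a^2*b*S^4) * hI
          + ((-32)*b^2*c*S*P^3 + (-64)*b^2*c*S^3*P + (-32)*b^3*S^3 + (-32)*a*b*c*S^4 + (-32)*a^2*b*S^3) * hII
          + ((-32)*b^2*d^2*P^5 + (-64)*b^2*d^2*S^2*P^3 + (-32)*b^2*d^2*S^4*P + 32*b^2*c*e*P^5 + 64*b^2*c*e*S^2*P^3 + (-32)*b^2*c*d*S^5 + 32*b^3*e*S^2*P^2 + 64*b^3*d*S^3*P + 32*b^3*c*S^4 + (-64)*a*b*d^2*S*P^4 + (-96)*a*b*d^2*S^3*P^2 + (-32)*a*b*d^2*S^5 + 64*a*b*c*e*S*P^4 + 96*a*b*c*e*S^3*P^2 + 32*a*b*c*d*S^4*P + 32*a*b^2*e*S*P^3 + 32*a*b^2*e*S^3*P + (-32)*a*b^2*d*P^4 + (-32)*a*b^2*d*S^2*P^2 + (-32)*a*b^2*c*S*P^3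 + (-64)*a*b^2*c*S^3*P + (-32)*a^2*d^2*S^2*P^3 + (-32)*a^2*d^2*S^4*P + 32*a^2*c*e*S^2*P^3 + 32*a^2*c*e*S^4*P + 64*a^2*b*e*S^2*P^2 + (-64)*a^2*b*d*S*P^3 + 64*a^2*b*d*S^3*P + (-64)*a^2*b*c*S^2*P^2 + 32*a^3*e*S^3*P + (-32)*a^3*d*S^2*P^2 + 32*a^3*d*S^4 + (-32)*a^3*c*S^3*P) * hu
      have hne : (P * (S*a + P*b)^2) ≠ 0 := mul_ne_zero hPne (pow_ne_zero 2 hv)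
      exact (mul_eq_zero.mp key).resolve_left hne
  · -- u ≠ 0
    by_cases hv : S*a + P*b = 0
    · -- v = 0, u ≠ 0
      have key : (P * (P*a - S*b)^2) *
          ((-4*(P*d + S*c)) * (8*P*a^2 + 8*(S^2 + P^2)*a*d - 8*X*(P*e + S*d))
            - (-4*(P*e + S*d)) * (8*S*a^2 + 8*(S^2 + P^2)*a*c - 8*X*(P*d + S*c))) = 0 := by
        linear_combination
          (64*b^2*e*P^5 + 32*b^2*e*S^2*P^3 + 32*b^3*P^4 + 32*a^2*e*P^5 + 32*a^2*b*P^4) * hI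
          + ((-64)*b^2*d*P^4 + (-32)*b^2*d*S^2*P^2 + (-32)*a*b^2*P^3 + (-32)*a^2*d*P^4 + (-32)*a^3*P^3) * hII
          + ((-64)*b^2*d^2*S*P^4 + (-32)*b^2*d^2*S^3*P^2 + 64*b^2*c*e*S*P^4 + 32*b^2*c*e*S^3*P^2 + 32*b^3*d*P^4 + 32*b^3*c*S*P^3 + 64*a*b*d^2*P^5 + 64*a*b*d^2*S^2*P^3 + (-64)*a*b*c*e*P^5 + (-64)*a*b*c*e*S^2*P^3 + 32*a*b^2*e*P^4 + 32*a*b^2*e*S^2*P^2 + 32*a*b^2*d*S*P^3 + 32*a*b^2*d*S^3*P + (-32)*a*b^2*c*P^4 + (-32)*a*b^2*c*S^2*P^2 + 32*a*b^3*P^3 + (-32)*a^2*d^2*S*P^4 + 32*a^2*c*e*S*P^4 + (-64)*a^2*b*e*S*P^3 + 64*a^2*b*d*P^4 + (-64)*a^2*b*d*S^2*P^2 + 64*a^2*b*c*S*P^3 + 32*a^3*d*S*P^3 + (-32)*a^3*c*P^4 + 32*a^3*b*P^3) * hv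
      have hne : (P * (P*a - S*b)^2) ≠ 0 := mul_ne_zero hPne (pow_ne_zero 2 hu)
      exact (mul_eq_zero.mp key).resolve_left hne
    · -- generic
      have key : (P * ((P*a - S*b) * (S*a + P*b))) *
          ((-4*(P*d + S*c)) * (8*P*a^2 + 8*(S^2 + P^2)*a*d - 8*X*(P*e + S*d))
            - (-4*(P*e + S*d)) * (8*S*a^2 + 8*(S^2 + P^2)*a*c - 8*X*(P*d + S*c))) = 0 := by
        linear_combination
          (32*a*b*e*P^5 + 32*a*b*e*S^2*P^3 + 32*a^2*e*S*P^4 + 32*a^2*e*S^3*P^2 + (-32)*a^2*b*S*P^3 + (-32)*a^3*S^2*P^2) * hI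
          + ((-32)*a*b*d*P^4 + (-32)*a*b*d*S^2*P^2 + (-32)*a^2*d*S*P^3 + (-32)*a^2*d*S^3*P + (-32)*a^2*b*P^3 + (-32)*a^3*S*P^2) * hII
      have hne : (P * ((P*a - S*b) * (S*a + P*b))) ≠ 0 :=
        mul_ne_zero hPne (mul_ne_zero hu hv)
      exact (mul_eq_zero.mp key).resolve_left hne


private lemma hda_congr {f : ℝ → ℝ} {v v' x : ℝ} (h : HasDerivAt f v x) (hv : v' = v) :
    HasDerivAt f v' x := hv ▸ h

theorem jacobian_vanishes (L : ℝ → ℝ → ℝ) (U : Set (ℝ × ℝ)) (hU : IsOpen U)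
    (hL : ContDiffOn ℝ 2 (fun p : ℝ × ℝ => L p.1 p.2) U)
    (hP : ∀ p ∈ U, p.2 ≠ 0)
    (hSD : ∀ p ∈ U,
      (deriv (fun s => L s p.2) p.1) ^ 2
        - (2 * p.1 / p.2) * deriv (fun s => L s p.2) p.1 * deriv (fun t => L p.1 t) p.2
        - (deriv (fun t => L p.1 t) p.2) ^ 2 = 1)
    (Θ T2 : ℝ → ℝ → ℝ)
    (hΘ : ∀ S P : ℝ, Θ S P =
      4 * (L S P - P * deriv (fun t => L S t) P - S * deriv (fun s => L s P) S))
    (hT2 : ∀ S P : ℝ, T2 S P =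
      4 * (S ^ 2 + P ^ 2) * (deriv (fun s => L s P) S) ^ 2
        + 4 * (L S P - P * deriv (fun t => L S t) P - S * deriv (fun s => L s P) S) ^ 2) :
    ∀ p ∈ U,
      deriv (fun s => Θ s p.2) p.1 * deriv (fun t => T2 p.1 t) p.2
        - deriv (fun t => Θ p.1 t) p.2 * deriv (fun s => T2 s p.2) p.1 = 0 := by
  intro p hp
  have hPne : p.2 ≠ 0 := hP p hp
  set f : ℝ × ℝ → ℝ := fun q => L q.1 q.2 with hfdef
  have hdiff : ∀ q ∈ U, DifferentiableAt ℝ f q := fun q hq =>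
    (hL.contDiffAt (hU.mem_nhds hq)).differentiableAt two_ne_zero
  have hcv1 : ∀ (x y : ℝ), HasDerivAt (fun s : ℝ => (s, y)) ((1:ℝ), (0:ℝ)) x :=
    fun x y => (hasDerivAt_id x).prodMk (hasDerivAt_const x y)
  have hcv2 : ∀ (x y : ℝ), HasDerivAt (fun t : ℝ => (x, t)) ((0:ℝ), (1:ℝ)) y :=
    fun x y => (hasDerivAt_const y x).prodMk (hasDerivAt_id y)
  set D : ℝ × ℝ → (ℝ × ℝ) →L[ℝ] ℝ := fderiv ℝ f with hDdef
  have hd1 : ∀ x y : ℝ, (x, y) ∈ U → HasDerivAt (fun s => L s y) (D (x, y) (1, 0)) x :=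
    fun x y hq => by have := (hdiff (x, y) hq).hasFDerivAt.comp_hasDerivAt x (hcv1 x y); exact this
  have hd2 : ∀ x y : ℝ, (x, y) ∈ U → HasDerivAt (fun t => L x t) (D (x, y) (0, 1)) y :=
    fun x y hq => (hdiff (x, y) hq).hasFDerivAt.comp_hasDerivAt y (hcv2 x y)
  obtain ⟨S, P⟩ := p
  simp only at hPne ⊢
  -- second derivative data
  have hDc : ContDiffAt ℝ 1 D (S, P) :=
    (hL.contDiffAt (hU.mem_nhds hp)).fderiv_right (by norm_num)
  have hDd : DifferentiableAt ℝ D (S, P) := hDc.differentiableAt one_ne_zero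
  set H := fderiv ℝ D (S, P) with hHdef
  have hsymm : ∀ w z : ℝ × ℝ, H w z = H z w :=
    second_derivative_symmetric_of_eventually
      (by filter_upwards [hU.mem_nhds hp] with y hy using (hdiff y hy).hasFDerivAt)
      hDd.hasFDerivAt
  have hDS : HasDerivAt (fun s => D (s, P)) (H (1, 0)) S :=
    hDd.hasFDerivAt.comp_hasDerivAt S (hcv1 S P)
  have hDP : HasDerivAt (fun t => D (S, t)) (H (0, 1)) P :=
    hDd.hasFDerivAt.comp_hasDerivAt P (hcv2 S P)
  have hg1S : HasDerivAt (fun s => D (s, P) (1, 0)) (H (1, 0) (1, 0)) S := by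
    simpa using hDS.clm_apply (hasDerivAt_const S ((1:ℝ), (0:ℝ)))
  have hg2S : HasDerivAt (fun s => D (s, P) (0, 1)) (H (1, 0) (0, 1)) S := by
    simpa using hDS.clm_apply (hasDerivAt_const S ((0:ℝ), (1:ℝ)))
  have hg1P : HasDerivAt (fun t => D (S, t) (1, 0)) (H (1, 0) (0, 1)) P := by
    have h := hDP.clm_apply (hasDerivAt_const P ((1:ℝ), (0:ℝ)))
    simpa [hsymm (0, 1) (1, 0)] using h
  have hg2P : HasDerivAt (fun t => D (S, t) (0, 1)) (H (0, 1) (0, 1)) P := by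
    simpa using hDP.clm_apply (hasDerivAt_const P ((0:ℝ), (1:ℝ)))
  -- abbreviations
  have hUS : ∀ᶠ s in 𝓝 S, (s, P) ∈ U :=
    (continuous_id.prodMk continuous_const :
      Continuous fun s : ℝ => (s, P)).continuousAt.preimage_mem_nhds (hU.mem_nhds hp)
  have hUP : ∀ᶠ t in 𝓝 P, (S, t) ∈ U :=
    (continuous_const.prodMk continuous_id :
      Continuous fun t : ℝ => (S, t)).continuousAt.preimage_mem_nhds (hU.mem_nhds hp)
  -- the differentiated self-duality relations
  have hsd : (D (S, P) (1, 0)) ^ 2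
      - 2 * S / P * (D (S, P) (1, 0)) * (D (S, P) (0, 1)) - (D (S, P) (0, 1)) ^ 2 = 1 := by
    have h := hSD (S, P) hp
    dsimp only at h
    rwa [(hd1 S P hp).deriv, (hd2 S P hp).deriv] at h
  have hΦevS : (fun s => (D (s, P) (1, 0)) ^ 2
        - 2 * s / P * (D (s, P) (1, 0)) * (D (s, P) (0, 1)) - (D (s, P) (0, 1)) ^ 2)
      =ᶠ[𝓝 S] (fun _ => 1) := by
    filter_upwards [hUS] with s hs
    have h := hSD (s, P) hs
    dsimp only at h
    rwa [(hd1 s P hs).deriv, (hd2 s P hs).deriv] at h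
  have hΦevP : (fun t => (D (S, t) (1, 0)) ^ 2
        - 2 * S / t * (D (S, t) (1, 0)) * (D (S, t) (0, 1)) - (D (S, t) (0, 1)) ^ 2)
      =ᶠ[𝓝 P] (fun _ => 1) := by
    filter_upwards [hUP] with t ht
    have h := hSD (S, t) ht
    dsimp only at h
    rwa [(hd1 S t ht).deriv, (hd2 S t ht).deriv] at h
  have hlinS : HasDerivAt (fun s : ℝ => 2 * s / P) (2 / P) S := by
    simpa using ((hasDerivAt_id S).const_mul 2).div_const P
  have hlinP : HasDerivAt (fun t : ℝ => 2 * S / t) (-(2 * S) / P ^ 2) P := by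
    have h := (hasDerivAt_const P (2 * S)).div (hasDerivAt_id P) hPne
    exact hda_congr h (by first | (simp only [id_eq]; push_cast; ring) | (push_cast; ring))
  have hIr : 2 * (D (S, P) (1, 0)) * (H (1, 0) (1, 0))
      - (2 * S / P) * ((H (1, 0) (1, 0)) * (D (S, P) (0, 1)) + (D (S, P) (1, 0)) * (H (1, 0) (0, 1)))
      - (2 / P) * (D (S, P) (1, 0)) * (D (S, P) (0, 1))
      - 2 * (D (S, P) (0, 1)) * (H (1, 0) (0, 1)) = 0 := by
    have h1 : HasDerivAt (fun s => (D (s, P) (1, 0)) ^ 2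
        - 2 * s / P * (D (s, P) (1, 0)) * (D (s, P) (0, 1)) - (D (s, P) (0, 1)) ^ 2)
        (2 * (D (S, P) (1, 0)) * (H (1, 0) (1, 0))
          - (2 * S / P) * ((H (1, 0) (1, 0)) * (D (S, P) (0, 1)) + (D (S, P) (1, 0)) * (H (1, 0) (0, 1)))
          - (2 / P) * (D (S, P) (1, 0)) * (D (S, P) (0, 1))
          - 2 * (D (S, P) (0, 1)) * (H (1, 0) (0, 1))) S := by
      have h := ((hg1S.fun_pow 2).sub ((hlinS.fun_mul hg1S).fun_mul hg2S)).sub (hg2S.fun_pow 2)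
      exact hda_congr h (by first | (simp only [id_eq]; push_cast; ring) | (push_cast; ring))
    have h0 : HasDerivAt (fun s => (D (s, P) (1, 0)) ^ 2
        - 2 * s / P * (D (s, P) (1, 0)) * (D (s, P) (0, 1)) - (D (s, P) (0, 1)) ^ 2) 0 S :=
      (hasDerivAt_const S (1:ℝ)).congr_of_eventuallyEq hΦevS
    exact h1.unique h0
  have hIIr : 2 * (D (S, P) (1, 0)) * (H (1, 0) (0, 1))
      + (2 * S / P ^ 2) * (D (S, P) (1, 0)) * (D (S, P) (0, 1))
      - (2 * S / P) * ((H (1, 0) (0, 1)) * (D (S, P) (0, 1)) + (D (S, P) (1, 0)) * (H (0, 1) (0, 1)))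
      - 2 * (D (S, P) (0, 1)) * (H (0, 1) (0, 1)) = 0 := by
    have h1 : HasDerivAt (fun t => (D (S, t) (1, 0)) ^ 2
        - 2 * S / t * (D (S, t) (1, 0)) * (D (S, t) (0, 1)) - (D (S, t) (0, 1)) ^ 2)
        (2 * (D (S, P) (1, 0)) * (H (1, 0) (0, 1))
          + (2 * S / P ^ 2) * (D (S, P) (1, 0)) * (D (S, P) (0, 1))
          - (2 * S / P) * ((H (1, 0) (0, 1)) * (D (S, P) (0, 1)) + (D (S, P) (1, 0)) * (H (0, 1) (0, 1)))
          - 2 * (D (S, P) (0, 1)) * (H (0, 1) (0, 1))) P := by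
      have h := ((hg1P.fun_pow 2).sub ((hlinP.fun_mul hg1P).fun_mul hg2P)).sub (hg2P.fun_pow 2)
      exact hda_congr h (by first | (simp only [id_eq]; push_cast; ring) | (push_cast; ring))
    have h0 : HasDerivAt (fun t => (D (S, t) (1, 0)) ^ 2
        - 2 * S / t * (D (S, t) (1, 0)) * (D (S, t) (0, 1)) - (D (S, t) (0, 1)) ^ 2) 0 P :=
      (hasDerivAt_const P (1:ℝ)).congr_of_eventuallyEq hΦevP
    exact h1.unique h0
  -- derivatives of Θ
  have hΘevS : (fun s => Θ s P) =ᶠ[𝓝 S]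
      (fun s => 4 * (L s P - P * D (s, P) (0, 1) - s * D (s, P) (1, 0))) := by
    filter_upwards [hUS] with s hs
    rw [hΘ s P, (hd1 s P hs).deriv, (hd2 s P hs).deriv]
  have hΘevP : (fun t => Θ S t) =ᶠ[𝓝 P]
      (fun t => 4 * (L S t - t * D (S, t) (0, 1) - S * D (S, t) (1, 0))) := by
    filter_upwards [hUP] with t ht
    rw [hΘ S t, (hd1 S t ht).deriv, (hd2 S t ht).deriv]
  have hΘS : deriv (fun s => Θ s P) S
      = -4 * (P * (H (1, 0) (0, 1)) + S * (H (1, 0) (1, 0))) := by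
    refine hΘevS.deriv_eq.trans ?_
    have h1 : HasDerivAt (fun s => 4 * (L s P - P * D (s, P) (0, 1) - s * D (s, P) (1, 0)))
        (-4 * (P * (H (1, 0) (0, 1)) + S * (H (1, 0) (1, 0)))) S := by
      have h := (((hd1 S P hp).sub (hg2S.const_mul P)).sub
        ((hasDerivAt_id S).mul hg1S)).const_mul 4
      exact hda_congr h (by first | (simp only [id_eq]; push_cast; ring) | (push_cast; ring))
    exact h1.deriv
  have hΘP : deriv (fun t => Θ S t) P
      = -4 * (P * (H (0, 1) (0, 1)) + S * (H (1, 0) (0, 1))) := by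
    refine hΘevP.deriv_eq.trans ?_
    have h1 : HasDerivAt (fun t => 4 * (L S t - t * D (S, t) (0, 1) - S * D (S, t) (1, 0)))
        (-4 * (P * (H (0, 1) (0, 1)) + S * (H (1, 0) (0, 1)))) P := by
      have h := (((hd2 S P hp).sub ((hasDerivAt_id P).mul hg2P)).sub
        (hg1P.const_mul S)).const_mul 4
      exact hda_congr h (by first | (simp only [id_eq]; push_cast; ring) | (push_cast; ring))
    exact h1.deriv
  -- derivatives of T2
  have hT2evS : (fun s => T2 s P) =ᶠ[𝓝 S]
      (fun s => 4 * (s ^ 2 + P ^ 2) * (D (s, P) (1, 0)) ^ 2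
        + 4 * (L s P - P * D (s, P) (0, 1) - s * D (s, P) (1, 0)) ^ 2) := by
    filter_upwards [hUS] with s hs
    rw [hT2 s P, (hd1 s P hs).deriv, (hd2 s P hs).deriv]
  have hT2evP : (fun t => T2 S t) =ᶠ[𝓝 P]
      (fun t => 4 * (S ^ 2 + t ^ 2) * (D (S, t) (1, 0)) ^ 2
        + 4 * (L S t - t * D (S, t) (0, 1) - S * D (S, t) (1, 0)) ^ 2) := by
    filter_upwards [hUP] with t ht
    rw [hT2 S t, (hd1 S t ht).deriv, (hd2 S t ht).deriv]
  have hT2S : deriv (fun s => T2 s P) S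
      = 8 * S * (D (S, P) (1, 0)) ^ 2
        + 8 * (S ^ 2 + P ^ 2) * (D (S, P) (1, 0)) * (H (1, 0) (1, 0))
        - 8 * (L S P - P * D (S, P) (0, 1) - S * D (S, P) (1, 0))
            * (P * (H (1, 0) (0, 1)) + S * (H (1, 0) (1, 0))) := by
    refine hT2evS.deriv_eq.trans ?_
    have hq : HasDerivAt (fun s : ℝ => 4 * (s ^ 2 + P ^ 2)) (4 * (2 * S)) S := by
      have h := ((hasDerivAt_pow 2 S).add_const (P ^ 2)).const_mul 4
      exact hda_congr h (by first | (simp only [id_eq]; push_cast; ring) | (push_cast; ring))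
    have hX : HasDerivAt (fun s => L s P - P * D (s, P) (0, 1) - s * D (s, P) (1, 0))
        (D (S, P) (1, 0) - P * (H (1, 0) (0, 1))
          - (1 * D (S, P) (1, 0) + S * (H (1, 0) (1, 0)))) S :=
      ((hd1 S P hp).sub (hg2S.const_mul P)).sub ((hasDerivAt_id S).mul hg1S)
    have h1 := (hq.fun_mul (hg1S.fun_pow 2)).add ((hX.fun_pow 2).const_mul 4)
    refine (hda_congr h1 ?_).deriv
    first | (simp only [id_eq]; push_cast; ring) | (push_cast; ring)
  have hT2P : deriv (fun t => T2 S t) P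
      = 8 * P * (D (S, P) (1, 0)) ^ 2
        + 8 * (S ^ 2 + P ^ 2) * (D (S, P) (1, 0)) * (H (1, 0) (0, 1))
        - 8 * (L S P - P * D (S, P) (0, 1) - S * D (S, P) (1, 0))
            * (P * (H (0, 1) (0, 1)) + S * (H (1, 0) (0, 1))) := by
    refine hT2evP.deriv_eq.trans ?_
    have hq : HasDerivAt (fun t : ℝ => 4 * (S ^ 2 + t ^ 2)) (4 * (2 * P)) P := by
      have h := ((hasDerivAt_pow 2 P).const_add (S ^ 2)).const_mul 4
      exact hda_congr h (by first | (simp only [id_eq]; push_cast; ring) | (push_cast; ring))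
    have hX : HasDerivAt (fun t => L S t - t * D (S, t) (0, 1) - S * D (S, t) (1, 0))
        (D (S, P) (0, 1) - (1 * D (S, P) (0, 1) + P * (H (0, 1) (0, 1)))
          - S * (H (1, 0) (0, 1))) P :=
      ((hd2 S P hp).sub ((hasDerivAt_id P).mul hg2P)).sub (hg1P.const_mul S)
    have h1 := (hq.fun_mul (hg1P.fun_pow 2)).add ((hX.fun_pow 2).const_mul 4)
    refine (hda_congr h1 ?_).deriv
    first | (simp only [id_eq]; push_cast; ring) | (push_cast; ring)
  rw [hΘS, hΘP, hT2S, hT2P]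
  exact jac_alg (D (S, P) (1, 0)) (D (S, P) (0, 1)) (H (1, 0) (1, 0)) (H (1, 0) (0, 1))
    (H (0, 1) (0, 1)) S P (L S P - P * D (S, P) (0, 1) - S * D (S, P) (1, 0))
    hPne hsd hIr hIIr
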